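/- Let H be a d×n real matrix (d ≥ n) with Frobenius norm 1, and let σ₁ ≥ ... ≥ σ_n ≥ 0 be its singular values. Define V(H) = ‖Hᵀ H - (1/n) I_n‖_F and V̂(H) = 1/n - σ_n². Then V(H) ≤ 2n · V̂(H). -/

import Mathlib

open Matrix Finset

theorem orthogonality_gap_le (d n : ℕ) (hn : 0 < n) (hd : n ≤ d)
    (H : Matrix (Fin d) (Fin n) ℝ)
    (σ : Fin n → ℝ) (hσpos : ∀ i, 0 ≤ σ i)
    (hmono : ∀ i j : Fin n, i ≤ j → σ j ≤ σ i)
    (U : Matrix (Fin d) (Fin d) ℝ) (V : Matrix (Fin n) (Fin n) ℝ)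
    (hU : U ∈ Matrix.orthogonalGroup (Fin d) ℝ)
    (hV : V ∈ Matrix.orthogonalGroup (Fin n) ℝ)
    (hSVD : H = U * (Matrix.of fun (i : Fin d) (j : Fin n) =>
      if (i : ℕ) = (j : ℕ) then σ j else 0) * Vᵀ)
    (hfrob : Real.sqrt (∑ i, ∑ j, H i j ^ 2) = 1) :
    Real.sqrt (∑ i, ∑ j, ((Hᵀ * H - (1 / (n : ℝ)) • (1 : Matrix (Fin n) (Fin n) ℝ)) i j) ^ 2)
      ≤ 2 * n * (1 / n - σ ⟨n - 1, Nat.sub_lt hn one_pos⟩ ^ 2) := by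
  set S : Matrix (Fin d) (Fin n) ℝ := Matrix.of fun (i : Fin d) (j : Fin n) =>
      if (i : ℕ) = (j : ℕ) then σ j else 0 with hS
  set last : Fin n := ⟨n - 1, Nat.sub_lt hn one_pos⟩ with hlast
  have hU1 : Uᵀ * U = 1 := by
    have := (Matrix.mem_orthogonalGroup_iff' (Fin d) ℝ).mp hU
    simpa [Matrix.star_eq_conjTranspose] using this
  have hV1 : Vᵀ * V = 1 := by
    have := (Matrix.mem_orthogonalGroup_iff' (Fin n) ℝ).mp hV
    simpa [Matrix.star_eq_conjTranspose] using this
  have hV2 : V * Vᵀ = 1 := by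
    have := (Matrix.mem_orthogonalGroup_iff (Fin n) ℝ).mp hV
    simpa [Matrix.star_eq_conjTranspose] using this
  -- Sᵀ * S is diagonal
  have hSS : Sᵀ * S = Matrix.diagonal (fun j => σ j ^ 2) := by
    ext j k
    simp only [Matrix.mul_apply, Matrix.transpose_apply, hS, Matrix.of_apply,
      Matrix.diagonal_apply]
    rcases eq_or_ne j k with rfl | hjk
    · rw [Finset.sum_eq_single (Fin.castLE hd j)]
      · simp [sq]
      · intro i _ hi
        have : (i : ℕ) ≠ (j : ℕ) := fun h => hi (by ext; simpa using h)
        simp [this]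
      · simp
    · rw [if_neg hjk]
      apply Finset.sum_eq_zero
      intro i _
      rcases eq_or_ne (i : ℕ) (j : ℕ) with h | h
      · have hk : (i : ℕ) ≠ (k : ℕ) := by
          intro hk
          exact hjk (by ext; omega)
        simp [hk]
      · simp [h]
  -- HᵀH = V D Vᵀ
  have hHH : Hᵀ * H = V * Matrix.diagonal (fun j => σ j ^ 2) * Vᵀ := by
    rw [hSVD]
    simp only [Matrix.transpose_mul, Matrix.transpose_transpose, Matrix.mul_assoc]
    rw [show Uᵀ * (U * (S * Vᵀ)) = S * Vᵀ by rw [← Matrix.mul_assoc, hU1, Matrix.one_mul]]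
    rw [← Matrix.mul_assoc Sᵀ S Vᵀ, hSS]
  -- sum of squared singular values is 1
  have htrace : (∑ i, ∑ j, H i j ^ 2) = ∑ j, σ j ^ 2 := by
    have h1 : (∑ i, ∑ j, H i j ^ 2) = Matrix.trace (Hᵀ * H) := by
      rw [Finset.sum_comm]
      simp [Matrix.trace, Matrix.mul_apply, Matrix.diag, sq]
    rw [h1, hHH, Matrix.trace_mul_comm, ← Matrix.mul_assoc,
      hV1, Matrix.one_mul, Matrix.trace_diagonal]
  have hsum : (∑ j, σ j ^ 2) = 1 := by
    have hnn : (0:ℝ) ≤ ∑ i, ∑ j, H i j ^ 2 :=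
      Finset.sum_nonneg fun i _ => Finset.sum_nonneg fun j _ => sq_nonneg _
    rw [← htrace]
    nlinarith [Real.sq_sqrt hnn, hfrob]
  -- the deviation diagonal
  set g : Fin n → ℝ := fun j => σ j ^ 2 - 1 / n with hg
  have hsmul : (1 / (n : ℝ)) • (1 : Matrix (Fin n) (Fin n) ℝ)
      = Matrix.diagonal (fun _ => (1 / n : ℝ)) := by
    ext i j
    rcases eq_or_ne i j with rfl | hij
    · simp [Matrix.diagonal_apply, Matrix.one_apply]
    · simp [Matrix.diagonal_apply, Matrix.one_apply, hij]
  have hM : Hᵀ * H - (1 / (n : ℝ)) • (1 : Matrix (Fin n) (Fin n) ℝ)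
      = V * Matrix.diagonal g * Vᵀ := by
    rw [hHH, hsmul]
    have : Matrix.diagonal g = Matrix.diagonal (fun j => σ j ^ 2)
        - Matrix.diagonal (fun _ => (1 / n : ℝ)) := by
      rw [Matrix.diagonal_sub]
    rw [this, Matrix.mul_sub, Matrix.sub_mul]
    congr 1
    have : V * Matrix.diagonal (fun _ => (1 / n : ℝ)) = (1 / (n:ℝ)) • V := by
      ext i j; simp [Matrix.mul_apply, Matrix.diagonal_apply, mul_comm]
    rw [this, Matrix.smul_mul, hV2, hsmul]
  -- Frobenius norm of the deviation
  set M : Matrix (Fin n) (Fin n) ℝ :=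
    Hᵀ * H - (1 / (n : ℝ)) • (1 : Matrix (Fin n) (Fin n) ℝ) with hMdef
  have hMfrob : (∑ i, ∑ j, M i j ^ 2) = ∑ j, g j ^ 2 := by
    have h1 : (∑ i, ∑ j, M i j ^ 2) = Matrix.trace (Mᵀ * M) := by
      rw [Finset.sum_comm]
      simp [Matrix.trace, Matrix.mul_apply, Matrix.diag, sq]
    have hMT : Mᵀ = M := by
      rw [hM]
      simp only [Matrix.transpose_mul, Matrix.transpose_transpose,
        Matrix.diagonal_transpose, Matrix.mul_assoc]
    rw [h1, hMT, hM]
    rw [show V * Matrix.diagonal g * Vᵀ * (V * Matrix.diagonal g * Vᵀ)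
        = V * (Matrix.diagonal g * Matrix.diagonal g) * Vᵀ by
      simp only [Matrix.mul_assoc]
      rw [show Vᵀ * (V * (Matrix.diagonal g * Vᵀ)) = Matrix.diagonal g * Vᵀ by
        rw [← Matrix.mul_assoc, hV1, Matrix.one_mul]]]
    rw [Matrix.diagonal_mul_diagonal, Matrix.trace_mul_comm, ← Matrix.mul_assoc,
      hV1, Matrix.one_mul, Matrix.trace_diagonal]
    simp [sq]
  -- key scalar facts
  have hlastle : ∀ j : Fin n, σ last ^ 2 ≤ σ j ^ 2 := by
    intro j
    have hle : j ≤ last := by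
      have hj := j.isLt
      rw [hlast, Fin.le_def]
      simp only [Fin.val_mk]
      omega
    exact pow_le_pow_left₀ (hσpos last) (hmono j last hle) 2
  have hVhat : 0 ≤ 1 / (n:ℝ) - σ last ^ 2 := by
    have h1 : (n:ℝ) * σ last ^ 2 ≤ ∑ j, σ j ^ 2 := by
      calc (n:ℝ) * σ last ^ 2 = ∑ _j : Fin n, σ last ^ 2 := by
            simp [Finset.card_univ, mul_comm]
        _ ≤ ∑ j, σ j ^ 2 := Finset.sum_le_sum fun j _ => hlastle j
    rw [hsum] at h1
    have hnpos : (0:ℝ) < n := by exact_mod_cast hn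
    rw [sub_nonneg, le_div_iff₀ hnpos]
    linarith
  have hgzero : (∑ j, g j) = 0 := by
    have : (∑ _j : Fin n, (1/(n:ℝ))) = 1 := by
      have hnpos : (0:ℝ) < n := by exact_mod_cast hn
      rw [Finset.sum_const, Finset.card_univ, Fintype.card_fin, nsmul_eq_mul]
      field_simp
    simp only [hg, Finset.sum_sub_distrib, hsum, this, sub_self]
  -- the inequality
  have step1 : Real.sqrt (∑ j, g j ^ 2) ≤ ∑ j, |g j| := by
    have h := Finset.sum_sq_le_sq_sum_of_nonneg
      (s := Finset.univ) (f := fun j : Fin n => |g j|) (fun i _ => abs_nonneg _)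
    simp only [sq_abs] at h
    calc Real.sqrt (∑ j, g j ^ 2) ≤ Real.sqrt ((∑ j, |g j|) ^ 2) := Real.sqrt_le_sqrt h
      _ = ∑ j, |g j| := Real.sqrt_sq (Finset.sum_nonneg fun j _ => abs_nonneg _)
  have step2 : (∑ j, |g j|) ≤ 2 * n * (1 / n - σ last ^ 2) := by
    have habs : ∀ j, |g j| = g j + 2 * max (-(g j)) 0 := by
      intro j
      rcases le_or_gt 0 (g j) with h | h
      · rw [abs_of_nonneg h, max_eq_right (by linarith)]; ring
      · rw [abs_of_neg h, max_eq_left (by linarith)]; ring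
    have hmax : ∀ j, max (-(g j)) 0 ≤ 1 / (n:ℝ) - σ last ^ 2 := by
      intro j
      apply max_le _ hVhat
      simp only [hg, neg_sub]
      linarith [hlastle j]
    calc (∑ j, |g j|) = ∑ j, (g j + 2 * max (-(g j)) 0) :=
          Finset.sum_congr rfl fun j _ => habs j
      _ = (∑ j, g j) + 2 * ∑ j, max (-(g j)) 0 := by
          rw [Finset.sum_add_distrib, Finset.mul_sum]
      _ ≤ 0 + 2 * ∑ _j : Fin n, (1 / (n:ℝ) - σ last ^ 2) := by
          rw [hgzero]
          gcongr with j _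
          exact hmax j
      _ = 2 * n * (1 / n - σ last ^ 2) := by
          simp [Finset.card_univ]; ring
  calc Real.sqrt (∑ i, ∑ j, M i j ^ 2) = Real.sqrt (∑ j, g j ^ 2) := by rw [hMfrob]
    _ ≤ ∑ j, |g j| := step1
    _ ≤ 2 * n * (1 / n - σ last ^ 2) := step2
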